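/- Let A ∈ ℝ^{m×n}, let U ∈ ℝ^{n×d} have orthonormal columns, let σ_c > 0, σ_z ≥ 0, σ_w ≥ 0 with σ_w² + σ_z²/m > 0. Define X = (σ_c²/d) A U (A U)ᵀ + (σ_w² + σ_z²/m) I_m and Y = (σ_c²/d) A U Uᵀ. Then X is positive definite (hence invertible), and the estimator H* = Yᵀ X⁻¹ minimizes the jittering risk J_{σ_w}(H) = (σ_c²/d) tr((H A − I) U Uᵀ (H A − I)ᵀ) + (σ_z²/m + σ_w²) tr(H Hᵀ) over all H ∈ ℝ^{n×m}, i.e., J_{σ_w}(Yᵀ X⁻¹) ≤ J_{σ_w}(H) for all H ∈ ℝ^{n×m}. -/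

import Mathlib

open Matrix

lemma psd_trace_nonneg {m : ℕ} {M : Matrix (Fin m) (Fin m) ℝ} (hM : M.PosSemidef) :
    0 ≤ M.trace := by
  rw [Matrix.trace]
  apply Finset.sum_nonneg
  intro i _
  have h := hM.dotProduct_mulVec_nonneg (Pi.single i 1)
  simpa [Matrix.mulVec_single, dotProduct, Pi.single_apply, Finset.sum_ite_eq'] using h

lemma psd_smul {m : ℕ} {M : Matrix (Fin m) (Fin m) ℝ} (hM : M.PosSemidef) {a : ℝ}
    (ha : 0 ≤ a) : (a • M).PosSemidef := by
  refine Matrix.PosSemidef.of_dotProduct_mulVec_nonneg ?_ (fun x => ?_)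
  · have h1 := hM.1
    simp only [Matrix.IsHermitian] at h1 ⊢
    rw [Matrix.conjTranspose_smul, h1]
    simp
  · rw [Matrix.smul_mulVec, dotProduct_smul, smul_eq_mul]
    exact mul_nonneg ha (hM.dotProduct_mulVec_nonneg x)

/-- The optimal jittering estimator for general linear inverse problems: with
`X = (σ_c²/d) A U (A U)ᵀ + (σ_w² + σ_z²/m) I` and `Y = (σ_c²/d) A U Uᵀ`, the matrix `X` is
positive definite and `H* = Yᵀ X⁻¹` minimizes the jittering risk. -/
theorem stmt14 (m n d : ℕ) (hm : 0 < m) (hn : 0 < n) (hd : 0 < d)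
    (A : Matrix (Fin m) (Fin n) ℝ) (U : Matrix (Fin n) (Fin d) ℝ) (hU : Uᵀ * U = 1)
    (σc σz σw : ℝ) (hσc : 0 < σc) (hσz : 0 ≤ σz) (hσw : 0 ≤ σw)
    (hpos : 0 < σw ^ 2 + σz ^ 2 / m) :
    let X : Matrix (Fin m) (Fin m) ℝ :=
      (σc ^ 2 / d) • (A * U * (A * U)ᵀ) + (σw ^ 2 + σz ^ 2 / m) • 1
    let Y : Matrix (Fin m) (Fin n) ℝ := (σc ^ 2 / d) • (A * U * Uᵀ)
    let J : Matrix (Fin n) (Fin m) ℝ → ℝ := fun H =>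
      σc ^ 2 / d * ((H * A - 1) * (U * Uᵀ) * (H * A - 1)ᵀ).trace
        + (σz ^ 2 / m + σw ^ 2) * (H * Hᵀ).trace
    X.PosDef ∧ ∀ H : Matrix (Fin n) (Fin m) ℝ, J (Yᵀ * X⁻¹) ≤ J H := by
  intro X Y J
  have hd' : (0 : ℝ) < d := by exact_mod_cast hd
  have ha : (0 : ℝ) ≤ σc ^ 2 / d := by positivity
  -- positive semidefiniteness of the first summand
  have hM : ((A * U) * (A * U)ᵀ).PosSemidef := by
    have h := Matrix.posSemidef_self_mul_conjTranspose (A * U)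
    simpa [Matrix.conjTranspose_eq_transpose_of_trivial] using h
  have hsmul : ((σc ^ 2 / d) • (A * U * (A * U)ᵀ)).PosSemidef := psd_smul hM ha
  -- positive definiteness of the second summand
  have hb1 : (((σw ^ 2 + σz ^ 2 / m)) • (1 : Matrix (Fin m) (Fin m) ℝ)).PosDef := by
    refine Matrix.PosDef.of_dotProduct_mulVec_pos ?_ (fun x hx => ?_)
    · simp only [Matrix.IsHermitian, Matrix.conjTranspose_smul, Matrix.conjTranspose_one]
      simp
    · rw [Matrix.smul_mulVec, Matrix.one_mulVec, dotProduct_smul, smul_eq_mul]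
      exact mul_pos hpos (Matrix.dotProduct_star_self_pos_iff.mpr hx)
  have hX : X.PosDef := Matrix.PosDef.posSemidef_add hsmul hb1
  refine ⟨hX, ?_⟩
  -- basic facts about X
  have hdet : IsUnit X.det := hX.det_pos.ne'.isUnit
  have hXsym : Xᵀ = X := by
    have := hX.1
    simpa [Matrix.conjTranspose_eq_transpose_of_trivial] using this.eq
  have hXpsd : X.PosSemidef := hX.posSemidef
  set K : Matrix (Fin n) (Fin m) ℝ := Yᵀ * X⁻¹ with hK
  have hKt : X * Kᵀ = Y := by
    rw [hK, Matrix.transpose_mul, Matrix.transpose_transpose, Matrix.transpose_nonsing_inv,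
      hXsym, ← Matrix.mul_assoc, Matrix.mul_nonsing_inv _ hdet, Matrix.one_mul]
  -- expansion of J
  have JH : ∀ H : Matrix (Fin n) (Fin m) ℝ,
      J H = ((H * X * Hᵀ).trace - 2 * (H * Y).trace) + σc ^ 2 / d * (U * Uᵀ).trace := by
    intro H
    have h1 : (H * A - 1) * (U * Uᵀ) * (H * A - 1)ᵀ
        = H * (A * U * (A * U)ᵀ) * Hᵀ - H * (A * U * Uᵀ) - (H * (A * U * Uᵀ))ᵀ + U * Uᵀ := by
      simp only [Matrix.transpose_sub, Matrix.transpose_mul, Matrix.transpose_one,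
        Matrix.transpose_transpose, Matrix.sub_mul, Matrix.mul_sub, Matrix.one_mul,
        Matrix.mul_one, Matrix.mul_assoc]
      abel
    have h2 : (H * X * Hᵀ).trace
        = σc ^ 2 / d * (H * (A * U * (A * U)ᵀ) * Hᵀ).trace
          + (σw ^ 2 + σz ^ 2 / m) * (H * Hᵀ).trace := by
      show (H * ((σc ^ 2 / d) • (A * U * (A * U)ᵀ) + (σw ^ 2 + σz ^ 2 / m) • 1) * Hᵀ).trace = _
      rw [Matrix.mul_add, Matrix.add_mul, Matrix.trace_add]
      simp [Matrix.mul_smul, Matrix.smul_mul, Matrix.trace_smul, Matrix.mul_assoc]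
    have h3 : (H * Y).trace = σc ^ 2 / d * (H * (A * U * Uᵀ)).trace := by
      show (H * ((σc ^ 2 / d) • (A * U * Uᵀ))).trace = _
      rw [Matrix.mul_smul, Matrix.trace_smul, smul_eq_mul]
    show σc ^ 2 / d * ((H * A - 1) * (U * Uᵀ) * (H * A - 1)ᵀ).trace
        + (σz ^ 2 / m + σw ^ 2) * (H * Hᵀ).trace = _
    rw [h1, Matrix.trace_add, Matrix.trace_sub, Matrix.trace_sub, Matrix.trace_transpose,
      h2, h3]
    ring
  intro H
  -- the quadratic remainder is nonnegative
  have hQ : ((H - K) * X * (H - K)ᵀ).PosSemidef := by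
    have h := hXpsd.mul_mul_conjTranspose_same (H - K)
    simpa [Matrix.conjTranspose_eq_transpose_of_trivial] using h
  have hP : 0 ≤ ((H - K) * X * (H - K)ᵀ).trace := psd_trace_nonneg hQ
  have e2 : (K * X * Hᵀ).trace = (H * Y).trace := by
    rw [← Matrix.trace_transpose (K * X * Hᵀ)]
    simp only [Matrix.transpose_mul, Matrix.transpose_transpose, hXsym, Matrix.mul_assoc, ← hKt]
  have e3 : (H * X * Kᵀ).trace = (H * Y).trace := by
    rw [Matrix.mul_assoc, hKt]
  have e4 : (K * X * Kᵀ).trace = (K * Y).trace := by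
    rw [Matrix.mul_assoc, hKt]
  have e1 : (H - K) * X * (H - K)ᵀ
      = H * X * Hᵀ - H * X * Kᵀ - K * X * Hᵀ + K * X * Kᵀ := by
    simp only [Matrix.transpose_sub, Matrix.sub_mul, Matrix.mul_sub]
    abel
  have hexp : ((H - K) * X * (H - K)ᵀ).trace
      = (H * X * Hᵀ).trace - 2 * (H * Y).trace + (K * Y).trace := by
    rw [e1, Matrix.trace_add, Matrix.trace_sub, Matrix.trace_sub, e2, e3, e4]
    ring
  have h5 := JH H
  have h6 := JH K
  rw [h5, h6]
  have : (K * X * Kᵀ).trace - 2 * (K * Y).trace = -(K * Y).trace := by rw [e4]; ring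
  linarith [hP, hexp, this]
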